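/- Let V be a finite-dimensional commutative semisimple ℚ-algebra and let α ∈ V be invertible. Define the bilinear form η on V by η(x,y) = tr_{V/ℚ}(α·x·y). Then η is nondegenerate, and for any two bases (e_1,…,e_n) and (f_1,…,f_n) of V that are dual with respect to η (i.e. η(e_i, f_j) = δ_{ij}), one has Σ_{i=1}^{n} e_i·f_i = α^{−1}. -/

import Mathlib

open LinearMap Module

/-- A reduced finite-dimensional `ℚ`-algebra is von Neumann regular. -/
lemma aux_vnr {V : Type*} [CommRing V] [Algebra ℚ V] [FiniteDimensional ℚ V]
    [IsReduced V] (z : V) : ∃ u : V, z * u * z = z := by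
  have : IsArtinianRing V := isArtinian_of_tower ℚ inferInstance
  let φ := IsArtinianRing.equivPi V
  refine ⟨φ.symm (fun I =>
    haveI : I.1.IsMaximal := I.2
    letI : Field (V ⧸ I.1) := Ideal.Quotient.field I.1
    (φ z I)⁻¹), φ.injective ?_⟩
  rw [map_mul, map_mul, AlgEquiv.apply_symm_apply]
  funext I
  haveI : I.1.IsMaximal := I.2
  letI : Field (V ⧸ I.1) := Ideal.Quotient.field I.1
  simp only [Pi.mul_apply]
  rcases eq_or_ne (φ z I) 0 with h | h
  · simp [h]
  · rw [mul_inv_cancel₀ h, one_mul]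

/-- Nondegeneracy of the trace form. -/
lemma aux_nondeg {V : Type*} [CommRing V] [Algebra ℚ V] [FiniteDimensional ℚ V]
    [IsReduced V] (z : V) (hz : ∀ y : V, Algebra.trace ℚ V (z * y) = 0) : z = 0 := by
  obtain ⟨u, hu⟩ := aux_vnr z
  set e := z * u with he
  have hee : e * e = e := by
    calc e * e = (z * u * z) * u := by ring
    _ = e := by rw [hu, he]
  set f : Module.End ℚ V := Algebra.lmul ℚ V e with hf
  have hproj : LinearMap.IsProj (LinearMap.range f) f := by
    refine ⟨fun x => LinearMap.mem_range_self f x, fun x hx => ?_⟩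
    obtain ⟨y, rfl⟩ := hx
    show e * (e * y) = e * y
    rw [← mul_assoc, hee]
  have htr : LinearMap.trace ℚ V f = (finrank ℚ (LinearMap.range f) : ℚ) :=
    hproj.trace
  have htr0 : LinearMap.trace ℚ V f = 0 := by
    rw [← Algebra.trace_apply, he]
    exact hz u
  have hrank : finrank ℚ (LinearMap.range f) = 0 := by
    exact_mod_cast htr0 ▸ htr.symm
  have hbot : LinearMap.range f = ⊥ := Submodule.finrank_eq_zero.mp hrank
  have he0 : e = 0 := by
    have : e ∈ LinearMap.range f := ⟨1, by show e * 1 = e; ring⟩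
    rw [hbot] at this
    simpa using this
  rw [he0, zero_mul] at hu
  exact hu.symm

/-- On a finite-dimensional commutative semisimple (i.e. reduced) `ℚ`-algebra `V`
with an invertible element `α`, the bilinear form `η(x,y) = tr_{V/ℚ}(α·x·y)` is
nondegenerate, and for any pair of `η`-dual bases `(eᵢ)`, `(fᵢ)` one has
`Σ eᵢ·fᵢ = α⁻¹`. -/
theorem stmt2 {V : Type*} [CommRing V] [Algebra ℚ V] [FiniteDimensional ℚ V]
    [IsReduced V] (α : V) (hα : IsUnit α) :
    (∀ x : V, (∀ y : V, Algebra.trace ℚ V (α * x * y) = 0) → x = 0) ∧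
    ∀ (n : ℕ) (e f : Basis (Fin n) ℚ V),
      (∀ i j : Fin n, Algebra.trace ℚ V (α * e i * f j) = if i = j then 1 else 0) →
      ∑ i : Fin n, e i * f i = Ring.inverse α := by
  have key : ∀ x : V, (∀ y : V, Algebra.trace ℚ V (α * x * y) = 0) → x = 0 := by
    intro x hx
    have hz : α * x = 0 := aux_nondeg (α * x) hx
    exact (IsUnit.mul_right_eq_zero hα).mp hz
  refine ⟨key, fun n e f hd => ?_⟩
  -- coordinates via the dual basis
  have hcoord : ∀ (x : V) (i : Fin n), (e.repr x i : ℚ) = Algebra.trace ℚ V (α * x * f i) := by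
    intro x i
    have heq : (e.coord i : V →ₗ[ℚ] ℚ) =
        (Algebra.trace ℚ V) ∘ₗ (LinearMap.mulLeft ℚ (α * f i)) := by
      apply e.ext
      intro j
      simp only [Basis.coord_apply, Basis.repr_self, LinearMap.comp_apply,
        LinearMap.mulLeft_apply]
      rw [show α * f i * e j = α * e j * f i by ring, hd j i, Finsupp.single_apply]
    have := LinearMap.congr_fun heq x
    simp only [Basis.coord_apply, LinearMap.comp_apply, LinearMap.mulLeft_apply] at this
    rw [this, show α * f i * x = α * x * f i by ring]
  -- trace formula
  have htrace : ∀ w : V, Algebra.trace ℚ V w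
      = ∑ i : Fin n, Algebra.trace ℚ V (α * (w * e i) * f i) := by
    intro w
    rw [Algebra.trace_eq_matrix_trace e w, Matrix.trace]
    simp only [Matrix.diag_apply, Algebra.leftMulMatrix_eq_repr_mul]
    exact Finset.sum_congr rfl fun i _ => hcoord (w * e i) i
  have hx : ∀ y : V, Algebra.trace ℚ V (α * ((∑ i : Fin n, e i * f i) - Ring.inverse α) * y) = 0 := by
    intro y
    have h1 : α * ((∑ i : Fin n, e i * f i) - Ring.inverse α) * y
        = (∑ i : Fin n, α * (y * e i) * f i) - (α * Ring.inverse α) * y := by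
      rw [mul_sub, sub_mul, Finset.mul_sum, Finset.sum_mul]
      congr 1
      exact Finset.sum_congr rfl fun i _ => by ring
    rw [h1, map_sub, Ring.mul_inverse_cancel α hα, one_mul, map_sum, ← htrace y, sub_self]
  have := key _ hx
  exact sub_eq_zero.mp this
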